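/- arXiv:2201.08612 — 8 statements merged into one kernel-verified Lean document; each statement's English description precedes it below -/
import Mathlib

section
/- For a binary string s of length n and any k with 1 ≤ k ≤ ⌈n/2⌉, the cumulative weight satisfies w_k(s) = Σ_{i=1}^{k} i·σ_i + k·Σ_{i=k+1}^{⌈n/2⌉} σ_i. -/
/-- cumulative weight `w_k(s)` : total number of 1s over all length-`k` substrings of
the binary string `s = s_1 ... s_n` (1-indexed). -/
def cumw (n : ℕ) (s : ℕ → ℕ) (k : ℕ) : ℕ :=
  ∑ i ∈ Finset.Icc 1 (n - k + 1), ∑ j ∈ Finset.Icc i (i + k - 1), s j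

/-- `σ_i = wt(s_i s_{n+1-i})` for `i ≤ ⌊n/2⌋`, and `σ_{⌈n/2⌉} = wt(s_{⌈n/2⌉})` when `n` odd. -/
def sigma' (n : ℕ) (s : ℕ → ℕ) (i : ℕ) : ℕ :=
  if n + 1 - i = i then s i else s i + s (n + 1 - i)

theorem stmt2 (n k : ℕ) (s : ℕ → ℕ) (hbits : ∀ i, s i ≤ 1)
    (hk1 : 1 ≤ k) (hk2 : k ≤ (n + 1) / 2) :
    cumw n s k =
      ∑ i ∈ Finset.Icc 1 k, i * sigma' n s i +
        k * ∑ i ∈ Finset.Icc (k + 1) ((n + 1) / 2), sigma' n s i := by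
  have hkn : k ≤ n := by omega
  set m := (n + 1) / 2 with hm
  -- Step 1: express LHS as a single weighted sum over positions
  have hL : cumw n s k = ∑ j ∈ Finset.Ioc 0 n, min j (min (n + 1 - j) k) * s j := by
    unfold cumw
    rw [Finset.sum_comm' (t' := Finset.Ioc 0 n)
        (s' := fun j => Finset.Icc (max 1 (j + 1 - k)) (min j (n + 1 - k)))
        (fun i j => by simp only [Finset.mem_Icc, Finset.mem_Ioc]; omega)]
    refine Finset.sum_congr rfl fun j hj => ?_
    rw [Finset.sum_const, smul_eq_mul, Nat.card_Icc]
    simp only [Finset.mem_Ioc] at hj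
    congr 1
    omega
  -- Step 2: RHS combined into one sum with coefficient min i k
  have e1 : Finset.Icc 1 k = Finset.Ioc 0 k := Finset.Icc_add_one_left_eq_Ioc 0 k
  have e2 : Finset.Icc (k + 1) m = Finset.Ioc k m := Finset.Icc_add_one_left_eq_Ioc k m
  have key : ∑ i ∈ Finset.Ioc 0 m, min i k * sigma' n s i
      = ∑ i ∈ Finset.Icc 1 k, i * sigma' n s i
        + k * ∑ i ∈ Finset.Icc (k + 1) m, sigma' n s i := by
    rw [e1, e2, Finset.mul_sum,
      ← Finset.sum_Ioc_consecutive (fun i => min i k * sigma' n s i) (Nat.zero_le k) hk2]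
    congr 1
    · refine Finset.sum_congr rfl fun i hi => ?_
      simp only [Finset.mem_Ioc] at hi
      rw [min_eq_left hi.2]
    · refine Finset.sum_congr rfl fun i hi => ?_
      simp only [Finset.mem_Ioc] at hi
      rw [min_eq_right (by omega)]
  -- Step 3: split position sum at m and reflect the upper half
  have hsplit : ∑ j ∈ Finset.Ioc 0 n, min j (min (n + 1 - j) k) * s j
      = ∑ j ∈ Finset.Ioc 0 m, min j (min (n + 1 - j) k) * s j
        + ∑ j ∈ Finset.Ioc m n, min j (min (n + 1 - j) k) * s j :=
    (Finset.sum_Ioc_consecutive _ (Nat.zero_le m) (by omega)).symm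
  have hrefl : ∑ j ∈ Finset.Ioc m n, min j (min (n + 1 - j) k) * s j
      = ∑ i ∈ Finset.Ioc 0 (n - m), min i k * s (n + 1 - i) := by
    refine Finset.sum_nbij' (fun j => n + 1 - j) (fun i => n + 1 - i) ?_ ?_ ?_ ?_ ?_
    · intro a ha; simp only [Finset.mem_Ioc] at *; omega
    · intro a ha; simp only [Finset.mem_Ioc] at *; omega
    · intro a ha; simp only [Finset.mem_Ioc] at ha
      show n + 1 - (n + 1 - a) = a; omega
    · intro a ha; simp only [Finset.mem_Ioc] at ha
      show n + 1 - (n + 1 - a) = a; omega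
    · intro a ha
      simp only [Finset.mem_Ioc] at ha
      show min a (min (n + 1 - a) k) * s a
          = min (n + 1 - a) k * s (n + 1 - (n + 1 - a))
      have h1 : n + 1 - (n + 1 - a) = a := by omega
      rw [h1]
      congr 1
      omega
  have hlow : ∑ j ∈ Finset.Ioc 0 m, min j (min (n + 1 - j) k) * s j
      = ∑ j ∈ Finset.Ioc 0 m, min j k * s j := by
    refine Finset.sum_congr rfl fun j hj => ?_
    simp only [Finset.mem_Ioc] at hj
    congr 1
    omega
  -- Step 4: recombine the two half-sums into the sigma' sum (parity case split)
  have hpar : ∑ i ∈ Finset.Ioc 0 m, min i k * sigma' n s i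
      = ∑ i ∈ Finset.Ioc 0 m, min i k * s i
        + ∑ i ∈ Finset.Ioc 0 (n - m), min i k * s (n + 1 - i) := by
    have hpt : ∀ i ∈ Finset.Ioc 0 (n - m), min i k * sigma' n s i
        = min i k * s i + min i k * s (n + 1 - i) := by
      intro i hi
      simp only [Finset.mem_Ioc] at hi
      rw [sigma', if_neg (by omega), mul_add]
    rcases Nat.even_or_odd n with he | ho
    · have h2 : n % 2 = 0 := Nat.even_iff.mp he
      have hnm : n - m = m := by omega
      rw [hnm, ← Finset.sum_add_distrib]
      refine Finset.sum_congr rfl fun i hi => ?_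
      simp only [Finset.mem_Ioc] at hi
      rw [sigma', if_neg (by omega), mul_add]
    · have h2 : n % 2 = 1 := Nat.odd_iff.mp ho
      have h3 : Finset.Ioc 0 m = Finset.Ioc 0 (n - m + 1) := by
        rw [show n - m + 1 = m by omega]
      rw [h3, Finset.sum_Ioc_succ_top (Nat.zero_le _), Finset.sum_Ioc_succ_top (Nat.zero_le _),
        Finset.sum_congr rfl hpt, Finset.sum_add_distrib]
      have h4 : sigma' n s (n - m + 1) = s (n - m + 1) := by
        rw [sigma', if_pos (by omega)]
      rw [h4]
      ring
  rw [hL, hsplit, hrefl, hlow, ← hpar, key]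
end

section
/- For a binary string s of length n and any k with 2 ≤ k ≤ ⌈n/2⌉, the cumulative weights satisfy the recursion w_k(s) = k·w_1(s) − Σ_{i=1}^{k-1} i·σ_{k-i}. -/
/-- `w_k(s) = k·w_1(s) − Σ_{i=1}^{k-1} i·σ_{k-i}`, stated additively over ℕ. -/
theorem stmt3 (n k : ℕ) (s : ℕ → ℕ) (hbits : ∀ i, s i ≤ 1)
    (hk1 : 2 ≤ k) (hk2 : k ≤ (n + 1) / 2) :
    cumw n s k + ∑ i ∈ Finset.Icc 1 (k - 1), i * sigma' n s (k - i) = k * cumw n s 1 := by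
  have h1 : 2 * k ≤ n + 1 := by omega
  -- cumw as a weighted sum with multiplicity coefficients
  have hA : cumw n s k = ∑ j ∈ Finset.Icc 1 n, min j (min (n + 1 - j) k) * s j := by
    unfold cumw
    calc ∑ i ∈ Finset.Icc 1 (n - k + 1), ∑ j ∈ Finset.Icc i (i + k - 1), s j
        = ∑ i ∈ Finset.Icc 1 (n - k + 1), ∑ j ∈ Finset.Icc 1 n,
            if i ≤ j ∧ j ≤ i + k - 1 then s j else 0 := by
          refine Finset.sum_congr rfl fun i hi => ?_
          rw [← Finset.sum_filter]
          congr 1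
          ext a
          simp only [Finset.mem_Icc, Finset.mem_filter] at hi ⊢
          omega
      _ = ∑ j ∈ Finset.Icc 1 n, ∑ i ∈ Finset.Icc 1 (n - k + 1),
            if i ≤ j ∧ j ≤ i + k - 1 then s j else 0 := Finset.sum_comm
      _ = ∑ j ∈ Finset.Icc 1 n, min j (min (n + 1 - j) k) * s j := by
          refine Finset.sum_congr rfl fun j hj => ?_
          rw [← Finset.sum_filter]
          have hf : (Finset.Icc 1 (n - k + 1)).filter (fun i => i ≤ j ∧ j ≤ i + k - 1)
              = Finset.Icc (max 1 (j + 1 - k)) (min j (n - k + 1)) := by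
            ext a
            simp only [Finset.mem_Icc, Finset.mem_filter] at hj ⊢
            omega
          rw [hf, Finset.sum_const, Nat.card_Icc, smul_eq_mul]
          simp only [Finset.mem_Icc] at hj
          congr 1
          omega
  have hB : cumw n s 1 = ∑ j ∈ Finset.Icc 1 n, s j := by
    unfold cumw
    rw [show n - 1 + 1 = n by omega]
    refine Finset.sum_congr rfl fun i _ => ?_
    simp
  -- the sigma sum
  have hC : ∑ i ∈ Finset.Icc 1 (k - 1), i * sigma' n s (k - i)
      = ∑ j ∈ Finset.Icc 1 (k - 1), (k - j) * (s j + s (n + 1 - j)) := by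
    refine Finset.sum_nbij' (fun a => k - a) (fun a => k - a) ?_ ?_ ?_ ?_ ?_
    · intro a ha; simp only [Finset.mem_Icc] at ha ⊢; omega
    · intro a ha; simp only [Finset.mem_Icc] at ha ⊢; omega
    · intro a ha; simp only [Finset.mem_Icc] at ha; show k - (k - a) = a; omega
    · intro a ha; simp only [Finset.mem_Icc] at ha; show k - (k - a) = a; omega
    · intro a ha
      simp only [Finset.mem_Icc] at ha
      have hne : ¬ (n + 1 - (k - a) = k - a) := by omega
      rw [sigma', if_neg hne]
      have : k - (k - a) = a := by omega
      rw [this]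
  have hD : ∑ j ∈ Finset.Icc 1 (k - 1), (k - j) * (s j + s (n + 1 - j))
      = (∑ j ∈ Finset.Icc 1 n, (if j ≤ k - 1 then (k - j) else 0) * s j)
        + ∑ j ∈ Finset.Icc 1 n, (if n + 2 - k ≤ j then (k - (n + 1 - j)) else 0) * s j := by
    have e1 : ∑ j ∈ Finset.Icc 1 n, (if j ≤ k - 1 then (k - j) else 0) * s j
        = ∑ j ∈ Finset.Icc 1 (k - 1), (k - j) * s j := by
      simp only [ite_mul, zero_mul]
      rw [← Finset.sum_filter]
      congr 1
      ext a
      simp only [Finset.mem_Icc, Finset.mem_filter]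
      omega
    have e2 : ∑ j ∈ Finset.Icc 1 n, (if n + 2 - k ≤ j then (k - (n + 1 - j)) else 0) * s j
        = ∑ j ∈ Finset.Icc 1 (k - 1), (k - j) * s (n + 1 - j) := by
      simp only [ite_mul, zero_mul]
      rw [← Finset.sum_filter]
      have hf : (Finset.Icc 1 n).filter (fun j => n + 2 - k ≤ j) = Finset.Icc (n + 2 - k) n := by
        ext a
        simp only [Finset.mem_Icc, Finset.mem_filter]
        omega
      rw [hf]
      refine Finset.sum_nbij' (fun a => n + 1 - a) (fun a => n + 1 - a) ?_ ?_ ?_ ?_ ?_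
      · intro a ha; simp only [Finset.mem_Icc] at ha ⊢; omega
      · intro a ha; simp only [Finset.mem_Icc] at ha ⊢; omega
      · intro a ha; simp only [Finset.mem_Icc] at ha; show n + 1 - (n + 1 - a) = a; omega
      · intro a ha; simp only [Finset.mem_Icc] at ha; show n + 1 - (n + 1 - a) = a; omega
      · intro a ha
        simp only [Finset.mem_Icc] at ha
        have h2 : n + 1 - (n + 1 - a) = a := by omega
        have h3 : k - (n + 1 - a) = k - (n + 1 - a) := rfl
        rw [h2]
    rw [e1, e2, ← Finset.sum_add_distrib]
    exact Finset.sum_congr rfl fun j _ => mul_add _ _ _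
  rw [hA, hC, hD, hB, Finset.mul_sum, ← Finset.sum_add_distrib, ← Finset.sum_add_distrib]
  refine Finset.sum_congr rfl fun j hj => ?_
  simp only [Finset.mem_Icc] at hj
  rw [← add_mul, ← add_mul]
  have hco : min j (min (n + 1 - j) k) + ((if j ≤ k - 1 then k - j else 0)
      + (if n + 2 - k ≤ j then k - (n + 1 - j) else 0)) = k := by
    split_ifs <;> omega
  rw [hco]
end

section
/- Let s ∈ {0,1}^n (n even) with s_1 = 0, s_n = 1, and suppose there is a set I ⊆ {2,...,n-1} closed under i ↦ n+1-i in the sense that s_i ≠ s_{n+1-i} for i ∈ I and s_i = s_{n+1-i} for i ∉ I, and the subsequence of s restricted to positions [n/2] ∩ I is a Catalan-Bertrand string. Then for every i < n/2 with [i] ∩ I ≠ ∅, the prefix weight is strictly smaller than the corresponding suffix weight: wt(s_2...s_i) < wt(s_{n-i+1}...s_{n-1}); and if [i] ∩ I = ∅ then wt(s_2...s_i) = wt(s_{n-i+1}...s_{n-1}). -/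
/-- `wtI s a b` = Hamming weight of the substring `s_a ... s_b` (1-indexed). -/
def wtI (s : ℕ → ℕ) (a b : ℕ) : ℕ := ∑ i ∈ Finset.Icc a b, s i

theorem stmt10 (n : ℕ) (s : ℕ → ℕ) (hbits : ∀ i, s i ≤ 1) (hn : Even n)
    (h1 : s 1 = 0) (hn1 : s n = 1)
    (I : Finset ℕ) (hI : I ⊆ Finset.Icc 2 (n - 1))
    (hIin : ∀ i ∈ I, s i ≠ s (n + 1 - i))
    (hIout : ∀ i ∈ Finset.Icc 2 (n - 1), i ∉ I → s i = s (n + 1 - i))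
    (hCB : ∀ j ∈ I, j ≤ n / 2 →
      (I.filter fun i => i ≤ j ∧ s i = 0).card > (I.filter fun i => i ≤ j ∧ s i = 1).card) :
    ∀ i, i < n / 2 →
      ((∃ j ∈ I, j ≤ i) → wtI s 2 i < wtI s (n - i + 1) (n - 1)) ∧
      ((∀ j ∈ I, ¬ j ≤ i) → wtI s 2 i = wtI s (n - i + 1) (n - 1)) := by
  intro i hi
  obtain ⟨m, hm⟩ := hn
  have h2i : 2 * i + 2 ≤ n := by omega
  -- reindex the suffix sum by the mirror map j ↦ n + 1 - j
  have hsuf : wtI s (n - i + 1) (n - 1) = ∑ j ∈ Finset.Icc 2 i, s (n + 1 - j) := by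
    unfold wtI
    refine Finset.sum_nbij' (i := fun k => n + 1 - k) (j := fun k => n + 1 - k)
      ?_ ?_ ?_ ?_ ?_ <;>
      (intro a ha; simp only [Finset.mem_Icc] at ha ⊢; try omega)
    congr 1
    omega
  set A := (Finset.Icc 2 i).filter (· ∈ I) with hAdef
  set B := (Finset.Icc 2 i).filter (fun j => j ∉ I) with hBdef
  have hsplit1 : wtI s 2 i = (∑ j ∈ A, s j) + ∑ j ∈ B, s j := by
    unfold wtI
    rw [← Finset.sum_filter_add_sum_filter_not (Finset.Icc 2 i) (· ∈ I)]
  have hsplit2 : (∑ j ∈ Finset.Icc 2 i, s (n + 1 - j))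
      = (∑ j ∈ A, s (n + 1 - j)) + ∑ j ∈ B, s (n + 1 - j) :=
    (Finset.sum_filter_add_sum_filter_not (Finset.Icc 2 i) (· ∈ I) _).symm
  have hBeq : ∑ j ∈ B, s (n + 1 - j) = ∑ j ∈ B, s j := by
    apply Finset.sum_congr rfl
    intro j hj
    rw [hBdef, Finset.mem_filter, Finset.mem_Icc] at hj
    exact (hIout j (Finset.mem_Icc.mpr ⟨hj.1.1, by omega⟩) hj.2).symm
  have hAI : A = I.filter (fun x => x ≤ i) := by
    ext x
    simp only [hAdef, Finset.mem_filter, Finset.mem_Icc]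
    constructor
    · rintro ⟨⟨_, hxi⟩, hxI⟩; exact ⟨hxI, hxi⟩
    · rintro ⟨hxI, hxi⟩
      have := Finset.mem_Icc.mp (hI hxI)
      exact ⟨⟨this.1, hxi⟩, hxI⟩
  have hA0 : ∑ j ∈ A, s (n + 1 - j) = (I.filter fun x => x ≤ i ∧ s x = 0).card := by
    rw [hAI, ← Finset.filter_filter, Finset.card_filter]
    apply Finset.sum_congr rfl
    intro x hx
    rw [Finset.mem_filter] at hx
    have h1 := hbits x
    have h2 := hbits (n + 1 - x)
    have h3 := hIin x hx.1
    split_ifs with h <;> omega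
  have hA1 : ∑ j ∈ A, s j = (I.filter fun x => x ≤ i ∧ s x = 1).card := by
    rw [hAI, ← Finset.filter_filter, Finset.card_filter]
    apply Finset.sum_congr rfl
    intro x hx
    have h1 := hbits x
    split_ifs with h <;> omega
  constructor
  · rintro ⟨j₀, hj₀I, hj₀i⟩
    have hJne : (I.filter (fun x => x ≤ i)).Nonempty :=
      ⟨j₀, Finset.mem_filter.mpr ⟨hj₀I, hj₀i⟩⟩
    set j := (I.filter (fun x => x ≤ i)).max' hJne with hjdef
    have hjmem := (I.filter (fun x => x ≤ i)).max'_mem hJne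
    rw [Finset.mem_filter] at hjmem
    have hcb := hCB j hjmem.1 (by omega)
    have e0 : (I.filter fun x => x ≤ i ∧ s x = 0) = I.filter fun x => x ≤ j ∧ s x = 0 := by
      ext y
      simp only [Finset.mem_filter]
      constructor
      · rintro ⟨hyI, hyi, h0⟩
        refine ⟨hyI, ?_, h0⟩
        rw [hjdef]
        exact Finset.le_max' (I.filter (fun x => x ≤ i)) y (Finset.mem_filter.mpr ⟨hyI, hyi⟩)
      · rintro ⟨hyI, hyj, h0⟩
        exact ⟨hyI, le_trans hyj hjmem.2, h0⟩
    have e1 : (I.filter fun x => x ≤ i ∧ s x = 1) = I.filter fun x => x ≤ j ∧ s x = 1 := by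
      ext y
      simp only [Finset.mem_filter]
      constructor
      · rintro ⟨hyI, hyi, h0⟩
        refine ⟨hyI, ?_, h0⟩
        rw [hjdef]
        exact Finset.le_max' (I.filter (fun x => x ≤ i)) y (Finset.mem_filter.mpr ⟨hyI, hyi⟩)
      · rintro ⟨hyI, hyj, h0⟩
        exact ⟨hyI, le_trans hyj hjmem.2, h0⟩
    rw [hsuf, hsplit1, hsplit2, hBeq, hA0, hA1, e0, e1]
    omega
  · intro hnone
    have hAempty : A = ∅ := by
      rw [hAI]
      apply Finset.filter_eq_empty_iff.mpr
      intro x hxI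
      exact hnone x hxI
    rw [hsuf, hsplit1, hsplit2, hBeq, hAempty]
    simp
end

section
/- A code C ⊆ {0,1}^n can correct the deletion of any t composition multisets C_{i_1},...,C_{i_t} if and only if it can correct the insertion of arbitrarily many spurious compositions into those same t multisets. Formally, for s, v ∈ C, the condition 'there exists I ⊆ [n] with |I| ≤ t such that C_i(s) = C_i(v) for all i ∈ [n] \ I' defines the same confusability relation for the deletion channel and the insertion channel. -/
/-- `compPk n k s`: multiset of compositions (pairs `(k, weight)`) of all length-`k`
substrings of the binary string `s = s_1 ... s_n` (1-indexed). -/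
def compPk (n k : ℕ) (s : ℕ → ℕ) : Multiset (ℕ × ℕ) :=
  (Finset.Icc 1 (n - k + 1)).val.map fun i => (k, ∑ j ∈ Finset.Icc i (i + k - 1), s j)

/-- The composition multiset `C(s) = ∪_{k ∈ [n]} C_k(s)`. -/
def compM (n : ℕ) (s : ℕ → ℕ) : Multiset (ℕ × ℕ) :=
  (Finset.Icc 1 n).val.bind fun k => compPk n k s

lemma fst_mem_compPk {n k : ℕ} {s : ℕ → ℕ} {p : ℕ × ℕ} (hp : p ∈ compPk n k s) : p.1 = k := by
  simp only [compPk, Multiset.mem_map] at hp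
  obtain ⟨i, _, rfl⟩ := hp; rfl

lemma compM_eq_sum (n : ℕ) (s : ℕ → ℕ) :
    compM n s = ∑ k ∈ Finset.Icc 1 n, compPk n k s := rfl

lemma filter_sum' {α β : Type*} (F : Finset α) (f : α → Multiset β) (p : β → Prop)
    [DecidablePred p] :
    (∑ k ∈ F, f k).filter p = ∑ k ∈ F, (f k).filter p := by
  classical
  induction F using Finset.induction_on with
  | empty => simp
  | insert _ _ h ih => simp [Finset.sum_insert h, Multiset.filter_add, ih]

lemma filter_compM (n i : ℕ) (s : ℕ → ℕ) (hi : i ∈ Finset.Icc 1 n) :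
    (compM n s).filter (fun p => p.1 = i) = compPk n i s := by
  classical
  rw [compM_eq_sum, filter_sum']
  rw [Finset.sum_eq_single i]
  · exact Multiset.filter_eq_self.2 fun p hp => fst_mem_compPk hp
  · intro k _ hk
    exact Multiset.filter_eq_nil.2 fun p hp => by
      simp [fst_mem_compPk hp, hk]
  · exact fun h => absurd hi h

/-- Equivalence of confusability under deletion of `t` composition multisets and under
insertion of arbitrarily many spurious compositions into `t` multisets. -/
theorem stmt11 (n t : ℕ) (s v : ℕ → ℕ)
    (hbs : ∀ i, s i ≤ 1) (hbv : ∀ i, v i ≤ 1) :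
    (∃ I : Finset ℕ, I ⊆ Finset.Icc 1 n ∧ I.card ≤ t ∧
        ∀ i ∈ Finset.Icc 1 n, i ∉ I → compPk n i s = compPk n i v) ↔
    (∃ I : Finset ℕ, I ⊆ Finset.Icc 1 n ∧ I.card ≤ t ∧
        ∃ Es Ev : Multiset (ℕ × ℕ),
          (∀ p ∈ Es, p.1 ∈ I) ∧ (∀ p ∈ Ev, p.1 ∈ I) ∧
          compM n s + Es = compM n v + Ev) := by
  classical
  constructor
  · rintro ⟨I, hIsub, hIcard, hEq⟩
    refine ⟨I, hIsub, hIcard,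
      ∑ k ∈ I, compPk n k v, ∑ k ∈ I, compPk n k s, ?_, ?_, ?_⟩
    · intro p hp
      rw [Multiset.mem_sum] at hp
      obtain ⟨k, hk, hpk⟩ := hp
      rwa [fst_mem_compPk hpk]
    · intro p hp
      rw [Multiset.mem_sum] at hp
      obtain ⟨k, hk, hpk⟩ := hp
      rwa [fst_mem_compPk hpk]
    · rw [compM_eq_sum, compM_eq_sum, ← Finset.sum_sdiff hIsub,
        ← Finset.sum_sdiff hIsub (f := fun k => compPk n k v)]
      have : ∑ k ∈ Finset.Icc 1 n \ I, compPk n k s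
          = ∑ k ∈ Finset.Icc 1 n \ I, compPk n k v := by
        refine Finset.sum_congr rfl fun k hk => ?_
        rw [Finset.mem_sdiff] at hk
        exact hEq k hk.1 hk.2
      rw [this]
      abel
  · rintro ⟨I, hIsub, hIcard, Es, Ev, hEs, hEv, hEq⟩
    refine ⟨I, hIsub, hIcard, fun i hi hiI => ?_⟩
    have h := congrArg (Multiset.filter (fun p => p.1 = i)) hEq
    rw [Multiset.filter_add, Multiset.filter_add, filter_compM n i s hi,
      filter_compM n i v hi,
      (Multiset.filter_eq_nil (p := fun p => p.1 = i)).2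
        (fun p hp h => hiI (h ▸ hEs p hp)),
      (Multiset.filter_eq_nil (p := fun p => p.1 = i)).2
        (fun p hp h => hiI (h ▸ hEv p hp))] at h
    simpa using h
end

section
/- Let t ≥ 1 and let s ∈ {0,1}^n be a string such that wt(s_1...s_i) + t + 2 ≤ wt(s_{n-i+1}...s_n) for some index i = k. Then for all j with 1 ≤ j ≤ t+1, c(s_j...s_k) ≠ c(s_{n-k+1}...s_{n-j+1}); i.e., wt(s_j...s_k) ≠ wt(s_{n-k+1}...s_{n-j+1}). -/
lemma wtI_split (s : ℕ → ℕ) (a m b : ℕ) (h1 : a ≤ m) (h2 : m ≤ b) :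
    wtI s a b = wtI s a m + wtI s (m + 1) b := by
  unfold wtI
  rw [← Finset.sum_union (by simp [Finset.disjoint_left]; omega)]
  congr 1
  ext x
  simp only [Finset.mem_Icc, Finset.mem_union]
  omega

lemma wtI_le (s : ℕ → ℕ) (hbits : ∀ i, s i ≤ 1) (a b : ℕ) :
    wtI s a b ≤ b + 1 - a := by
  calc wtI s a b ≤ ∑ _i ∈ Finset.Icc a b, 1 :=
        Finset.sum_le_sum fun i _ => hbits i
    _ = b + 1 - a := by simp [Nat.card_Icc]

theorem stmt14 (n t k : ℕ) (s : ℕ → ℕ) (hbits : ∀ i, s i ≤ 1)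
    (ht : 1 ≤ t) (hk1 : t + 1 ≤ k) (hk2 : k ≤ n)
    (h : wtI s 1 k + t + 2 ≤ wtI s (n - k + 1) n) :
    ∀ j, 1 ≤ j → j ≤ t + 1 → wtI s j k ≠ wtI s (n - k + 1) (n - j + 1) := by
  intro j hj1 hj2
  rcases Nat.eq_or_lt_of_le hj1 with hj | hj
  · subst hj
    have hn : n - 1 + 1 = n := by omega
    rw [hn]
    omega
  · -- j ≥ 2
    have split1 : wtI s 1 k = wtI s 1 (j - 1) + wtI s j k := by
      have := wtI_split s 1 (j - 1) k (by omega) (by omega)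
      rwa [show j - 1 + 1 = j by omega] at this
    have split2 : wtI s (n - k + 1) n
        = wtI s (n - k + 1) (n - j + 1) + wtI s (n - j + 2) n := by
      have := wtI_split s (n - k + 1) (n - j + 1) n (by omega) (by omega)
      rwa [show n - j + 1 + 1 = n - j + 2 by omega] at this
    have b1 : wtI s 1 (j - 1) ≤ j - 1 + 1 - 1 := wtI_le s hbits 1 (j - 1)
    have b2 : wtI s (n - j + 2) n ≤ n + 1 - (n - j + 2) := wtI_le s hbits (n - j + 2) n
    omega
end

section
/- Let n be even and t ≥ 2. Suppose σ, σ' ∈ {0,1,2}^{n/2} agree in coordinates 1,...,n/2−t−1 and satisfy Σ_{j=n/2−t}^{n/2} σ_j = Σ_{j=n/2−t}^{n/2} σ'_j. Then the difference D = Σ_{i=n/2−t}^{n/2−1} [ (i·W − Σ_{j=1}^{i-1} j·σ_{i-j}) − (i·W − Σ_{j=1}^{i-1} j·σ'_{i-j}) ] (for W = Σ_j σ_j = Σ_j σ'_j) satisfies D ≤ (t+1)^3/4 if t is even, and D ≤ t(t+1)(t+2)/4 if t is odd. -/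
open Finset

section Aux

private lemma gaussAux (N : ℕ) : 2 * ∑ d ∈ range N, ((d : ℤ) + 1) = N * (N + 1) := by
  induction N with
  | zero => simp
  | succ n ih => rw [sum_range_succ]; push_cast; push_cast at ih; linarith

private lemma cubeSumAux (N : ℕ) :
    3 * ∑ r ∈ range N, ((r : ℤ) * ((r : ℤ) - 1)) = N * (N - 1) * (N - 2) := by
  induction N with
  | zero => simp
  | succ n ih => rw [sum_range_succ]; push_cast; push_cast at ih; linarith

private lemma optCoreAux (t h : ℕ) (hht : h ≤ t + 1) (B : ℕ → ℤ) (hB : ∀ r, |B r| ≤ 2)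
    (hs : |∑ r ∈ range (t + 1), B r| ≤ 2) :
    3 * ∑ r ∈ range (t + 1), B r * ((r : ℤ) * ((r : ℤ) - 1)) ≤
      2 * ((t : ℤ) + 1) * t * ((t : ℤ) - 1) - 4 * ((h : ℤ) * ((h : ℤ) - 1) * ((h : ℤ) - 2))
      - 6 * ((t : ℤ) + 1) * ((h : ℤ) * ((h : ℤ) - 1)) + 12 * (h : ℤ) * ((h : ℤ) * ((h : ℤ) - 1))
      + 6 * ((h : ℤ) * ((h : ℤ) - 1)) := by
  have hc0 : (0 : ℤ) ≤ (h : ℤ) * ((h : ℤ) - 1) := by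
    rcases Nat.eq_zero_or_pos h with h0 | h1
    · simp [h0]
    · have : (1 : ℤ) ≤ (h : ℤ) := by exact_mod_cast h1
      nlinarith
  obtain ⟨c, hc⟩ : ∃ c : ℤ, c = (h : ℤ) * ((h : ℤ) - 1) := ⟨_, rfl⟩
  rw [← hc] at hc0
  have key : ∑ r ∈ range (t + 1), B r * ((r : ℤ) * ((r : ℤ) - 1)) ≤
      2 * (∑ r ∈ Ico h (t + 1), ((r : ℤ) * ((r : ℤ) - 1) - c)
        - ∑ r ∈ range h, ((r : ℤ) * ((r : ℤ) - 1) - c)) + 2 * c := by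
    have e1 : ∑ r ∈ range (t + 1), B r * ((r : ℤ) * ((r : ℤ) - 1))
        = ∑ r ∈ range (t + 1), B r * ((r : ℤ) * ((r : ℤ) - 1) - c)
          + c * ∑ r ∈ range (t + 1), B r := by
      rw [Finset.mul_sum, ← Finset.sum_add_distrib]
      exact Finset.sum_congr rfl fun r _ => by ring
    rw [e1]
    have e2 : ∑ r ∈ range (t + 1), B r * ((r : ℤ) * ((r : ℤ) - 1) - c)
        = ∑ r ∈ range h, B r * ((r : ℤ) * ((r : ℤ) - 1) - c)
          + ∑ r ∈ Ico h (t + 1), B r * ((r : ℤ) * ((r : ℤ) - 1) - c) := by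
      rw [range_eq_Ico, ← Finset.sum_Ico_consecutive _ (Nat.zero_le h) hht, range_eq_Ico]
    have b1 : ∑ r ∈ range h, B r * ((r : ℤ) * ((r : ℤ) - 1) - c)
        ≤ ∑ r ∈ range h, (-2) * ((r : ℤ) * ((r : ℤ) - 1) - c) := by
      apply Finset.sum_le_sum
      intro r hr
      have hrh : r < h := mem_range.mp hr
      have hWc : (r : ℤ) * ((r : ℤ) - 1) - c ≤ 0 := by
        have h1 : (r : ℤ) + 1 ≤ (h : ℤ) := by exact_mod_cast hrh
        have hr0 : (0 : ℤ) ≤ (r : ℤ) := Int.natCast_nonneg r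
        rw [hc]; nlinarith
      have := abs_le.mp (hB r)
      nlinarith
    have b2 : ∑ r ∈ Ico h (t + 1), B r * ((r : ℤ) * ((r : ℤ) - 1) - c)
        ≤ ∑ r ∈ Ico h (t + 1), 2 * ((r : ℤ) * ((r : ℤ) - 1) - c) := by
      apply Finset.sum_le_sum
      intro r hr
      have hrh : h ≤ r := (mem_Ico.mp hr).1
      have hWc : (0 : ℤ) ≤ (r : ℤ) * ((r : ℤ) - 1) - c := by
        rcases Nat.eq_zero_or_pos r with r0 | r1
        · have h0 : h = 0 := by omega
          simp [hc, r0, h0]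
        · have h1 : (h : ℤ) ≤ (r : ℤ) := by exact_mod_cast hrh
          have h2 : (1 : ℤ) ≤ (r : ℤ) := by exact_mod_cast r1
          have h3 : (0 : ℤ) ≤ (h : ℤ) := Int.natCast_nonneg h
          rw [hc]
          nlinarith [mul_nonneg (sub_nonneg.mpr h1) (by linarith : (0:ℤ) ≤ (r:ℤ) + (h:ℤ) - 1)]
      have := abs_le.mp (hB r)
      nlinarith
    have b3 : c * ∑ r ∈ range (t + 1), B r ≤ 2 * c := by
      have := abs_le.mp hs
      nlinarith
    have l1 : ∑ r ∈ range h, (-2 : ℤ) * ((r : ℤ) * ((r : ℤ) - 1) - c)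
        = (-2) * ∑ r ∈ range h, ((r : ℤ) * ((r : ℤ) - 1) - c) := (Finset.mul_sum _ _ _).symm
    have l2 : ∑ r ∈ Ico h (t + 1), (2 : ℤ) * ((r : ℤ) * ((r : ℤ) - 1) - c)
        = 2 * ∑ r ∈ Ico h (t + 1), ((r : ℤ) * ((r : ℤ) - 1) - c) := (Finset.mul_sum _ _ _).symm
    rw [e2]
    rw [l1] at b1
    rw [l2] at b2
    linarith
  have split : ∑ r ∈ range (t + 1), ((r : ℤ) * ((r : ℤ) - 1) - c)
      = ∑ r ∈ range h, ((r : ℤ) * ((r : ℤ) - 1) - c)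
        + ∑ r ∈ Ico h (t + 1), ((r : ℤ) * ((r : ℤ) - 1) - c) := by
    rw [range_eq_Ico, ← Finset.sum_Ico_consecutive _ (Nat.zero_le h) hht, range_eq_Ico]
  have s1 : ∑ r ∈ range (t + 1), ((r : ℤ) * ((r : ℤ) - 1) - c)
      = ∑ r ∈ range (t + 1), ((r : ℤ) * ((r : ℤ) - 1)) - ((t : ℤ) + 1) * c := by
    rw [Finset.sum_sub_distrib, Finset.sum_const, card_range]; push_cast; ring
  have s2 : ∑ r ∈ range h, ((r : ℤ) * ((r : ℤ) - 1) - c)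
      = ∑ r ∈ range h, ((r : ℤ) * ((r : ℤ) - 1)) - (h : ℤ) * c := by
    rw [Finset.sum_sub_distrib, Finset.sum_const, card_range]; push_cast; ring
  have T1 := cubeSumAux (t + 1)
  have T2 := cubeSumAux h
  push_cast at T1 T2
  rw [s2] at split key
  rw [s1] at split
  subst hc
  linarith

private lemma optAux (t : ℕ) (B : ℕ → ℤ) (hB : ∀ r, |B r| ≤ 2)
    (hs : |∑ r ∈ range (t + 1), B r| ≤ 2) :
    (Even t → 2 * ∑ r ∈ range (t + 1), B r * ((r : ℤ) * ((r : ℤ) - 1)) ≤ ((t : ℤ) + 1) ^ 3) ∧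
    (¬ Even t → 2 * ∑ r ∈ range (t + 1), B r * ((r : ℤ) * ((r : ℤ) - 1)) ≤
        (t : ℤ) * ((t : ℤ) + 1) * ((t : ℤ) + 2)) := by
  constructor
  · rintro ⟨s, rfl⟩
    have core := optCoreAux (s + s) s (by omega) B hB hs
    have hcast : ((s + s : ℕ) : ℤ) = (s : ℤ) + s := by push_cast; ring
    rw [hcast] at core ⊢
    have h0 : (0 : ℤ) ≤ (s : ℤ) := Int.natCast_nonneg s
    nlinarith [core, sq_nonneg ((s : ℤ))]
  · intro hodd
    obtain ⟨s, rfl⟩ : ∃ s, t = 2 * s + 1 := by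
      rcases Nat.even_or_odd t with he | ⟨s, hs'⟩
      · exact absurd he hodd
      · exact ⟨s, hs'⟩
    have core := optCoreAux (2 * s + 1) (s + 1) (by omega) B hB hs
    have hcast : ((2 * s + 1 : ℕ) : ℤ) = 2 * (s : ℤ) + 1 := by push_cast; ring
    have hcast2 : ((s + 1 : ℕ) : ℤ) = (s : ℤ) + 1 := by push_cast; ring
    rw [hcast, hcast2] at core
    rw [hcast]
    have h0 : (0 : ℤ) ≤ (s : ℤ) := Int.natCast_nonneg s
    nlinarith [core, sq_nonneg ((s : ℤ))]

end Aux

/-- The difference `D = Σ_{i=m−t}^{m−1} [(i·W − Σ_{j=1}^{i−1} j·σ_{i−j}) − (i·W − Σ_{j=1}^{i−1} j·σ'_{i−j})]`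
with `W = Σ_{j=1}^{m} σ_j`. -/
def Ddiff (m t : ℕ) (σ σ' : ℕ → ℕ) : ℤ :=
  ∑ i ∈ Finset.Icc (m - t) (m - 1),
    (((i : ℤ) * ∑ j ∈ Finset.Icc 1 m, (σ j : ℤ) -
        ∑ j ∈ Finset.Icc 1 (i - 1), (j : ℤ) * (σ (i - j) : ℤ)) -
     ((i : ℤ) * ∑ j ∈ Finset.Icc 1 m, (σ j : ℤ) -
        ∑ j ∈ Finset.Icc 1 (i - 1), (j : ℤ) * (σ' (i - j) : ℤ)))

section Rearrange

private lemma stepABAux (m t : ℕ) (σ σ' : ℕ → ℕ) :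
    Ddiff m t σ σ' = ∑ i ∈ Icc (m - t) (m - 1), ∑ k ∈ Icc 1 (i - 1),
      ((i - k : ℕ) : ℤ) * ((σ' k : ℤ) - (σ k : ℤ)) := by
  unfold Ddiff
  apply Finset.sum_congr rfl
  intro i _
  have e : ∑ j ∈ Icc 1 (i - 1), (j : ℤ) * ((σ' (i - j) : ℤ) - (σ (i - j) : ℤ))
      = ∑ j ∈ Icc 1 (i - 1), ((j : ℤ) * (σ' (i - j) : ℤ) - (j : ℤ) * (σ (i - j) : ℤ)) :=
    Finset.sum_congr rfl fun j _ => by ring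
  have stepA : ((i : ℤ) * ∑ j ∈ Finset.Icc 1 m, (σ j : ℤ) -
        ∑ j ∈ Finset.Icc 1 (i - 1), (j : ℤ) * (σ (i - j) : ℤ)) -
     ((i : ℤ) * ∑ j ∈ Finset.Icc 1 m, (σ j : ℤ) -
        ∑ j ∈ Finset.Icc 1 (i - 1), (j : ℤ) * (σ' (i - j) : ℤ))
      = ∑ j ∈ Icc 1 (i - 1), (j : ℤ) * ((σ' (i - j) : ℤ) - (σ (i - j) : ℤ)) := by
    rw [e, Finset.sum_sub_distrib]; ring
  rw [stepA]
  apply Finset.sum_nbij' (fun j => i - j) (fun k => i - k)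
  · intro a ha; simp only [mem_Icc] at *; omega
  · intro a ha; simp only [mem_Icc] at *; omega
  · intro a ha; simp only [mem_Icc] at *; omega
  · intro a ha; simp only [mem_Icc] at *; omega
  · intro a ha
    simp only [mem_Icc] at ha
    have h1 : i - (i - a) = a := by omega
    rw [h1]

private lemma stepCAux (m t : ℕ) (a : ℕ → ℤ) :
    ∑ i ∈ Icc (m - t) (m - 1), ∑ k ∈ Icc 1 (i - 1), ((i - k : ℕ) : ℤ) * a k
    = ∑ k ∈ Icc 1 (m - 2), a k *
        ∑ i ∈ (Icc (m - t) (m - 1)).filter (fun i => k < i), ((i - k : ℕ) : ℤ) := by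
  have h1 : ∀ i ∈ Icc (m - t) (m - 1),
      ∑ k ∈ Icc 1 (i - 1), ((i - k : ℕ) : ℤ) * a k
      = ∑ k ∈ Icc 1 (m - 2), if k < i then ((i - k : ℕ) : ℤ) * a k else 0 := by
    intro i hi
    simp only [mem_Icc] at hi
    rw [← Finset.sum_filter]
    apply Finset.sum_congr
    · ext k; simp only [mem_Icc, mem_filter]; omega
    · intros; rfl
  rw [Finset.sum_congr rfl h1, Finset.sum_comm]
  apply Finset.sum_congr rfl
  intro k _
  rw [← Finset.sum_filter, Finset.mul_sum]
  exact Finset.sum_congr rfl fun i _ => by ring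

private lemma stepDAux (m t k : ℕ) (hk : m - t ≤ k) :
    2 * ∑ i ∈ (Icc (m - t) (m - 1)).filter (fun i => k < i), ((i - k : ℕ) : ℤ)
    = ((m - 1 - k : ℕ) : ℤ) * ((m - 1 - k : ℕ) + 1) := by
  have hset : (Icc (m - t) (m - 1)).filter (fun i => k < i) = Ico (k + 1) (m - 1 + 1) := by
    ext i; simp only [mem_Icc, mem_filter, mem_Ico]; omega
  rw [hset, Finset.sum_Ico_eq_sum_range]
  have h2 : m - 1 + 1 - (k + 1) = m - 1 - k := by omega
  rw [h2]
  have h3 : ∀ d ∈ range (m - 1 - k), ((k + 1 + d - k : ℕ) : ℤ) = (d : ℤ) + 1 := by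
    intro d _
    have : k + 1 + d - k = d + 1 := by omega
    rw [this]; push_cast; ring
  rw [Finset.sum_congr rfl h3]
  exact gaussAux (m - 1 - k)

private lemma part1Aux (m t : ℕ) (σ σ' : ℕ → ℕ)
    (hagree : ∀ i, 1 ≤ i → i ≤ m - t - 1 → σ i = σ' i) :
    2 * Ddiff m t σ σ' =
      ∑ r ∈ range (t + 1),
        (if r < m then (σ' (m - r) : ℤ) - (σ (m - r) : ℤ) else 0)
          * ((r : ℤ) * ((r : ℤ) - 1)) := by
  set a : ℕ → ℤ := fun k => (σ' k : ℤ) - (σ k : ℤ) with ha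
  have ha0 : ∀ k, 1 ≤ k → k ≤ m - t - 1 → a k = 0 := by
    intro k h1 h2
    simp only [ha, hagree k h1 h2, sub_self]
  rw [stepABAux, stepCAux]
  rw [Finset.mul_sum]
  have e1 : ∀ k ∈ Icc 1 (m - 2),
      2 * (a k * ∑ i ∈ (Icc (m - t) (m - 1)).filter (fun i => k < i), ((i - k : ℕ) : ℤ))
      = a k * (2 * ∑ i ∈ (Icc (m - t) (m - 1)).filter (fun i => k < i), ((i - k : ℕ) : ℤ)) :=
    fun k _ => by ring
  rw [Finset.sum_congr rfl e1]
  rw [← Finset.sum_filter_of_ne (s := Icc 1 (m - 2)) (p := fun k => m - t ≤ k)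
    (by intro k hk hne
        simp only [mem_Icc] at hk
        by_contra hlt
        exact hne (by rw [ha0 k hk.1 (by omega)]; ring))]
  rw [← Finset.sum_filter_of_ne (s := range (t + 1)) (p := fun r => 2 ≤ r ∧ r < m)
    (by intro r hr hne
        constructor
        · by_contra h2
          apply hne
          interval_cases r <;> simp
        · by_contra h2
          apply hne
          rw [if_neg h2, zero_mul])]
  apply Finset.sum_nbij' (fun k => m - k) (fun r => m - r)
  · intro k hk; simp only [mem_filter, mem_Icc, mem_range] at *; omega
  · intro r hr; simp only [mem_filter, mem_Icc, mem_range] at *; omega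
  · intro k hk; simp only [mem_filter, mem_Icc] at hk; omega
  · intro r hr; simp only [mem_filter, mem_range] at hr; omega
  · intro k hk
    simp only [mem_filter, mem_Icc] at hk
    have h1 : m - k < m := by omega
    have h2 : m - (m - k) = k := by omega
    rw [if_pos h1, h2, stepDAux m t k hk.2]
    have c2 : ((m - k : ℕ) : ℤ) = (m : ℤ) - k := by
      have : k ≤ m := by omega
      push_cast [this]
      ring
    have c1 : ((m - 1 - k : ℕ) : ℤ) = (m : ℤ) - 1 - k := by
      have h3 : m - 1 - k = m - (1 + k) := by omega
      have h4 : 1 + k ≤ m := by omega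
      rw [h3]
      push_cast [h4]
      ring
    rw [c1, c2]
    simp only [ha]
    ring

end Rearrange

theorem stmt16 (n t : ℕ) (hn : Even n) (ht : 2 ≤ t)
    (σ σ' : ℕ → ℕ) (hσ : ∀ i, σ i ≤ 2) (hσ' : ∀ i, σ' i ≤ 2)
    (hagree : ∀ i, 1 ≤ i → i ≤ n / 2 - t - 1 → σ i = σ' i)
    (hsum : ∑ j ∈ Finset.Icc (n / 2 - t) (n / 2), σ j =
            ∑ j ∈ Finset.Icc (n / 2 - t) (n / 2), σ' j) :
    (Even t → 4 * Ddiff (n / 2) t σ σ' ≤ ((t : ℤ) + 1) ^ 3) ∧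
    (¬ Even t → 4 * Ddiff (n / 2) t σ σ' ≤ (t : ℤ) * ((t : ℤ) + 1) * ((t : ℤ) + 2)) := by
  set m : ℕ := n / 2 with hm
  set B : ℕ → ℤ := fun r => if r < m then (σ' (m - r) : ℤ) - (σ (m - r) : ℤ) else 0 with hB
  have hBabs : ∀ r, |B r| ≤ 2 := by
    intro r
    simp only [hB]
    split
    · rw [abs_le]
      have := hσ (m - r)
      have := hσ' (m - r)
      constructor <;> push_cast <;> omega
    · simp
  have hsumIcc : ∑ k ∈ Icc (m - t) m, ((σ' k : ℤ) - (σ k : ℤ)) = 0 := by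
    rw [Finset.sum_sub_distrib]
    have : ((∑ j ∈ Icc (m - t) m, σ j : ℕ) : ℤ) = ((∑ j ∈ Icc (m - t) m, σ' j : ℕ) : ℤ) :=
      Nat.cast_inj.mpr hsum
    push_cast at this
    linarith
  have hBsum : |∑ r ∈ range (t + 1), B r| ≤ 2 := by
    have e0 : ∑ r ∈ range (t + 1), B r
        = ∑ r ∈ (range (t + 1)).filter (fun r => r < m),
            ((σ' (m - r) : ℤ) - (σ (m - r) : ℤ)) := by
      rw [Finset.sum_filter]
    have e1 : ∑ r ∈ (range (t + 1)).filter (fun r => r < m),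
          ((σ' (m - r) : ℤ) - (σ (m - r) : ℤ))
        = ∑ k ∈ Icc (max (m - t) 1) m, ((σ' k : ℤ) - (σ k : ℤ)) := by
      apply Finset.sum_nbij' (fun r => m - r) (fun k => m - k)
      · intro r hr; simp only [mem_filter, mem_Icc, mem_range, le_max_iff, max_le_iff] at *; omega
      · intro k hk; simp only [mem_filter, mem_Icc, mem_range, le_max_iff, max_le_iff] at *; omega
      · intro r hr; simp only [mem_filter, mem_range] at hr; omega
      · intro k hk; simp only [mem_Icc, le_max_iff, max_le_iff] at hk; omega
      · intro r hr
        rfl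
    rw [e0, e1]
    rcases Nat.lt_or_ge t m with hc | hc
    · have : max (m - t) 1 = m - t := by omega
      rw [this, hsumIcc]
      norm_num
    · rcases Nat.eq_zero_or_pos m with m0 | m1
      · have : Icc (max (m - t) 1) m = ∅ := by
          ext x
          simp only [mem_Icc, Finset.notMem_empty, iff_false, max_le_iff, le_max_iff, not_and,
            not_le]
          omega
        rw [this]
        norm_num
      · have hmax : max (m - t) 1 = 1 := by omega
        rw [hmax]
        have hins : Icc (m - t) m = insert 0 (Icc 1 m) := by
          ext x; simp only [mem_Icc, mem_insert]; omega
        rw [hins, Finset.sum_insert (by simp)] at hsumIcc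
        have h0 : ∑ k ∈ Icc 1 m, ((σ' k : ℤ) - (σ k : ℤ))
            = -((σ' 0 : ℤ) - (σ 0 : ℤ)) := by linarith
        rw [h0]
        have := hσ 0
        have := hσ' 0
        rw [abs_le]
        constructor <;> push_cast <;> omega
  have h2d := part1Aux m t σ σ' hagree
  have hopt := optAux t B hBabs hBsum
  have h4 : 4 * Ddiff m t σ σ'
      = 2 * ∑ r ∈ range (t + 1), B r * ((r : ℤ) * ((r : ℤ) - 1)) := by
    rw [← h2d]; ring
  constructor
  · intro he
    rw [h4]
    exact hopt.1 he
  · intro he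
    rw [h4]
    exact hopt.2 he
end

section
/- Let t ≥ 2 and suppose σ, σ' ∈ {0,1,2}^m agree outside an index window I = {k−t−1,...,k} (with t+2 ≤ k ≤ m) and satisfy Σ_{j∈I} σ_j = Σ_{j∈I} σ'_j. Then Σ_{i=k-t}^{k-1} Σ_{j=1}^{i-1} j·(σ'_{i-j} − σ_{i-j}) = (t(t+1)/2)(σ'_{k-t-1} − σ_{k-t-1}) + ((t-1)t/2)(σ'_{k-t} − σ_{k-t}) + ... + 1·(σ'_{k-2} − σ_{k-2}), and this quantity is at most t(t+2)^2/4 if t is even and at most t(t+1)(t+3)/4 if t is odd. -/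
open Finset in
private lemma gaussG17 (n : ℕ) : 2 * ∑ i ∈ range n, ((i:ℤ)+1) = (n:ℤ)*((n:ℤ)+1) := by
  induction n with
  | zero => simp
  | succ n ih => rw [sum_range_succ, mul_add, ih]; push_cast; ring

open Finset in
private lemma c1_17 (n : ℕ) : ∑ j ∈ range n, (2*(j:ℤ)+2) = (n:ℤ)*((n:ℤ)+1) := by
  induction n with
  | zero => simp
  | succ n ih => rw [sum_range_succ, ih]; push_cast; ring

open Finset in
private lemma c2_17 (n : ℕ) :
    3 * ∑ j ∈ range n, ((j:ℤ)+1)*(2*(j:ℤ)+2) = (n:ℤ)*((n:ℤ)+1)*(2*(n:ℤ)+1) := by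
  induction n with
  | zero => simp
  | succ n ih => rw [sum_range_succ, mul_add, ih]; push_cast; ring

open Finset in
private lemma c3_17 (n : ℕ) :
    3 * ∑ u ∈ range n, ((u:ℤ)+1)*(2*(u:ℤ)+4) = 2*(n:ℤ)*((n:ℤ)+1)*((n:ℤ)+2) := by
  induction n with
  | zero => simp
  | succ n ih => rw [sum_range_succ, mul_add, ih]; push_cast; ring

open Finset in
private lemma qdiff_eq17 (K t : ℕ) (hK : 1 ≤ K) (d : ℕ → ℤ)
    (hd : ∀ p, 1 ≤ p → p < K → d p = 0) :
    (∑ i ∈ Icc (K+1) (K+t), ∑ j ∈ Icc 1 (i-1), (j:ℤ) * d (i - j))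
      = ∑ j ∈ range t, (∑ i ∈ range (t - j), ((i:ℤ)+1)) * d (K + j) := by
  have step1 : (∑ i ∈ Icc (K+1) (K+t), ∑ j ∈ Icc 1 (i-1), (j:ℤ) * d (i - j))
      = ∑ a ∈ range t, ∑ j ∈ range (a+1), (((a:ℤ) - j) + 1) * d (K + j) := by
    rw [← Finset.Ico_add_one_right_eq_Icc, sum_Ico_eq_sum_range]
    have hb : K + t + 1 - (K + 1) = t := by omega
    rw [hb]
    refine sum_congr rfl ?_
    intro a ha
    rw [mem_range] at ha
    have e1 : Icc 1 (K + 1 + a - 1) = Icc 1 (K + a) := by congr 1; omega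
    rw [e1]
    have e2 : ∑ j ∈ Icc 1 (K + a), (j:ℤ) * d (K + 1 + a - j)
        = ∑ j ∈ Icc 1 (a+1), (j:ℤ) * d (K + 1 + a - j) := by
      refine (sum_subset (Icc_subset_Icc_right (by omega)) ?_).symm
      intro j hj hj2
      rw [mem_Icc] at hj; rw [mem_Icc] at hj2
      have : d (K + 1 + a - j) = 0 := hd _ (by omega) (by omega)
      rw [this, mul_zero]
    have hb2 : a + 1 + 1 - 1 = a + 1 := by omega
    rw [e2, ← Finset.Ico_add_one_right_eq_Icc, sum_Ico_eq_sum_range, hb2,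
        ← sum_range_reflect (fun j => (((a:ℤ) - j) + 1) * d (K + j)) (a+1)]
    refine sum_congr rfl ?_
    intro j hj
    rw [mem_range] at hj
    have h1 : a + 1 - 1 - j = a - j := by omega
    have h3 : K + 1 + a - (1 + j) = K + (a - j) := by omega
    rw [h1, h3, Nat.cast_sub (by omega : j ≤ a)]
    push_cast
    ring
  rw [step1]
  rw [sum_comm' (t' := range t) (s' := fun j => Ico j t) (by
    intro a j
    simp only [mem_range, mem_Ico]
    omega)]
  refine sum_congr rfl ?_
  intro j hj
  rw [mem_range] at hj
  rw [← sum_mul]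
  congr 1
  rw [sum_Ico_eq_sum_range]
  refine sum_congr rfl ?_
  intro i hi
  rw [mem_range] at hi
  push_cast
  ring

open Finset in
private lemma rhs_eq17 (K t : ℕ) (d : ℕ → ℤ) :
    ∑ r ∈ Icc 1 t, ((r:ℤ)*((r:ℤ)+1)/2) * d (K + t - r)
      = ∑ j ∈ range t, (∑ i ∈ range (t - j), ((i:ℤ)+1)) * d (K + j) := by
  apply mul_left_cancel₀ (two_ne_zero (α := ℤ))
  rw [mul_sum, mul_sum]
  have lhs1 : ∀ r ∈ Icc 1 t, 2*(((r:ℤ)*((r:ℤ)+1)/2) * d (K + t - r))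
      = ((r:ℤ)*((r:ℤ)+1)) * d (K+t-r) := by
    intro r _
    rw [← mul_assoc, Int.mul_ediv_cancel' ((Int.even_mul_succ_self (r:ℤ)).two_dvd)]
  have rhs1 : ∀ j ∈ range t, 2*((∑ i ∈ range (t - j), ((i:ℤ)+1)) * d (K + j))
      = (((t-j:ℕ):ℤ)*(((t-j:ℕ):ℤ)+1)) * d (K+j) := by
    intro j _
    rw [← mul_assoc, gaussG17 (t-j)]
  rw [sum_congr rfl lhs1, sum_congr rfl rhs1]
  rw [← Finset.Ico_add_one_right_eq_Icc, sum_Ico_eq_sum_range]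
  rw [← sum_range_reflect (fun j => (((t-j:ℕ):ℤ)*(((t-j:ℕ):ℤ)+1)) * d (K+j)) t]
  have hb : t + 1 - 1 = t := by omega
  rw [hb]
  refine sum_congr rfl ?_
  intro j hj
  rw [mem_range] at hj
  have e1 : t - (t - 1 - j) = 1 + j := by omega
  have e2 : K + (t - 1 - j) = K + t - (1 + j) := by omega
  rw [e1, e2]

open Finset in
private lemma abel_eq17 (K t : ℕ) (d : ℕ → ℤ) :
    ∑ j ∈ range t, (∑ i ∈ range (t - j), ((i:ℤ)+1)) * d (K + j)
      = ∑ j ∈ range t, ((t-j:ℕ):ℤ) * ∑ i ∈ range (j+1), d (K + i) := by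
  symm
  have R : ∑ j ∈ range t, ((t-j:ℕ):ℤ) * ∑ i ∈ range (j+1), d (K + i)
       = ∑ i ∈ range t, ∑ j ∈ Ico i t, ((t-j:ℕ):ℤ) * d (K + i) := by
    simp only [mul_sum]
    exact sum_comm' (by intro j i; simp only [mem_range, mem_Ico]; omega)
  rw [R]
  refine sum_congr rfl ?_
  intro i hi
  rw [mem_range] at hi
  rw [sum_mul, sum_Ico_eq_sum_range,
      ← sum_range_reflect (fun u => ((u:ℤ)+1) * d (K+i)) (t-i)]
  refine sum_congr rfl ?_
  intro u hu
  rw [mem_range] at hu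
  have e : ((t - (i+u):ℕ):ℤ) = ((t - i - 1 - u : ℕ):ℤ) + 1 := by omega
  rw [e]

open Finset in
private lemma opt_bound17 (t : ℕ) (e : ℕ → ℤ) (hlo : ∀ i, -2 ≤ e i) (hhi : ∀ i, e i ≤ 2)
    (hsum : ∑ i ∈ range t, e i ≤ 4) :
    (Even t → 4 * (∑ j ∈ range t, ((t-j:ℕ):ℤ) * ∑ i ∈ range (j+1), e i) ≤ (t:ℤ)*((t:ℤ)+2)^2) ∧
    (¬ Even t → 4 * (∑ j ∈ range t, ((t-j:ℕ):ℤ) * ∑ i ∈ range (j+1), e i)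
        ≤ (t:ℤ)*((t:ℤ)+1)*((t:ℤ)+3)) := by
  set h := (t+1)/2 with hh
  have hht : h ≤ t := by omega
  have hS1 : ∀ j : ℕ, (∑ i ∈ range (j+1), e i) ≤ 2*(j:ℤ)+2 := by
    intro j
    calc ∑ i ∈ range (j+1), e i ≤ ∑ _i ∈ range (j+1), (2:ℤ) :=
          sum_le_sum (fun i _ => hhi i)
    _ = 2*(j:ℤ)+2 := by simp; ring
  have hS2 : ∀ j : ℕ, j < t → (∑ i ∈ range (j+1), e i) ≤ 2*((t:ℤ)-(j:ℤ)) + 2 := by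
    intro j hj
    have hsplit : ∑ i ∈ range (j+1), e i + ∑ i ∈ Ico (j+1) t, e i = ∑ i ∈ range t, e i := by
      simp only [range_eq_Ico]
      exact sum_Ico_consecutive e (by omega) (by omega)
    have htail : -(2*((t:ℤ) - ((j:ℤ)+1))) ≤ ∑ i ∈ Ico (j+1) t, e i := by
      have h1 : ∑ _i ∈ Ico (j+1) t, (-2:ℤ) ≤ ∑ i ∈ Ico (j+1) t, e i :=
        sum_le_sum (fun i _ => hlo i)
      have hc : ∑ _i ∈ Ico (j+1) t, (-2:ℤ) = -(2*(((t - (j+1)):ℕ):ℤ)) := by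
        simp [Nat.card_Ico]; ring
      have hc2 : (((t - (j+1)):ℕ):ℤ) = (t:ℤ) - ((j:ℤ)+1) := by omega
      rw [hc, hc2] at h1
      exact h1
    linarith
  set Q := ∑ j ∈ range t, ((t-j:ℕ):ℤ) * ∑ i ∈ range (j+1), e i with hQdef
  have hsplitQ : Q = (∑ j ∈ range h, ((t-j:ℕ):ℤ) * ∑ i ∈ range (j+1), e i)
      + ∑ j ∈ Ico h t, ((t-j:ℕ):ℤ) * ∑ i ∈ range (j+1), e i := by
    rw [hQdef]; simp only [range_eq_Ico]; rw [← sum_Ico_consecutive _ (Nat.zero_le h) hht]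
  have hP1 : (∑ j ∈ range h, ((t-j:ℕ):ℤ) * ∑ i ∈ range (j+1), e i)
      ≤ ∑ j ∈ range h, ((t:ℤ)-(j:ℤ)) * (2*(j:ℤ)+2) := by
    refine sum_le_sum ?_
    intro j hj
    rw [mem_range] at hj
    have hcast : ((t-j:ℕ):ℤ) = (t:ℤ)-(j:ℤ) := by omega
    rw [hcast]
    have hc : (0:ℤ) ≤ (t:ℤ)-(j:ℤ) := by omega
    exact mul_le_mul_of_nonneg_left (hS1 j) hc
  have hP2 : (∑ j ∈ Ico h t, ((t-j:ℕ):ℤ) * ∑ i ∈ range (j+1), e i)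
      ≤ ∑ j ∈ Ico h t, ((t:ℤ)-(j:ℤ)) * (2*((t:ℤ)-(j:ℤ))+2) := by
    refine sum_le_sum ?_
    intro j hj
    rw [mem_Ico] at hj
    have hcast : ((t-j:ℕ):ℤ) = (t:ℤ)-(j:ℤ) := by omega
    rw [hcast]
    have hc : (0:ℤ) ≤ (t:ℤ)-(j:ℤ) := by omega
    exact mul_le_mul_of_nonneg_left (hS2 j hj.2) hc
  have hA : ∑ j ∈ range h, ((t:ℤ)-(j:ℤ)) * (2*(j:ℤ)+2)
      = ((t:ℤ)+1) * (∑ j ∈ range h, (2*(j:ℤ)+2)) - ∑ j ∈ range h, ((j:ℤ)+1)*(2*(j:ℤ)+2) := by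
    rw [mul_sum, ← sum_sub_distrib]
    exact sum_congr rfl (fun j _ => by ring)
  have hB : ∑ j ∈ Ico h t, ((t:ℤ)-(j:ℤ)) * (2*((t:ℤ)-(j:ℤ))+2)
      = ∑ u ∈ range (t-h), ((u:ℤ)+1)*(2*(u:ℤ)+4) := by
    rw [sum_Ico_eq_sum_range,
        ← sum_range_reflect (fun u => ((u:ℤ)+1)*(2*(u:ℤ)+4)) (t-h)]
    refine sum_congr rfl ?_
    intro u hu
    rw [mem_range] at hu
    have e1 : ((h+u:ℕ):ℤ) = (h:ℤ)+(u:ℤ) := by push_cast; ring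
    have e2 : ((t - h - 1 - u : ℕ):ℤ) = (t:ℤ)-(h:ℤ)-1-(u:ℤ) := by omega
    rw [e1, e2]
    ring
  have hq : Q ≤ ((t:ℤ)+1) * (∑ j ∈ range h, (2*(j:ℤ)+2))
      - (∑ j ∈ range h, ((j:ℤ)+1)*(2*(j:ℤ)+2))
      + ∑ u ∈ range (t-h), ((u:ℤ)+1)*(2*(u:ℤ)+4) := by
    rw [hsplitQ]
    have := hA
    have := hB
    linarith
  have hval : 3*Q ≤ 3*((t:ℤ)+1)*((h:ℤ)*((h:ℤ)+1))
      - (h:ℤ)*((h:ℤ)+1)*(2*(h:ℤ)+1)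
      + 2*((t-h:ℕ):ℤ)*(((t-h:ℕ):ℤ)+1)*(((t-h:ℕ):ℤ)+2) := by
    have e1 := c1_17 h
    have e2 := c2_17 h
    have e3 := c3_17 (t-h)
    nlinarith [hq, e1, e2, e3]
  constructor
  · intro hev
    obtain ⟨s, hs⟩ := hev
    have ct : (t:ℤ) = 2*(s:ℤ) := by omega
    have ch : (h:ℤ) = (s:ℤ) := by omega
    have cth : ((t-h:ℕ):ℤ) = (s:ℤ) := by omega
    rw [ct, ch, cth] at hval
    rw [ct]
    nlinarith [hval]
  · intro hodd
    obtain ⟨s, hs⟩ := (Nat.odd_iff.mpr (Nat.not_even_iff.mp hodd))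
    have ct : (t:ℤ) = 2*(s:ℤ)+1 := by omega
    have ch : (h:ℤ) = (s:ℤ)+1 := by omega
    have cth : ((t-h:ℕ):ℤ) = (s:ℤ) := by omega
    rw [ct, ch, cth] at hval
    rw [ct]
    nlinarith [hval]

/-- `Q = Σ_{i=k−t}^{k−1} Σ_{j=1}^{i−1} j·(σ'_{i−j} − σ_{i−j})`. -/
def Qdiff (k t : ℕ) (σ σ' : ℕ → ℕ) : ℤ :=
  ∑ i ∈ Finset.Icc (k - t) (k - 1), ∑ j ∈ Finset.Icc 1 (i - 1),
    (j : ℤ) * ((σ' (i - j) : ℤ) - (σ (i - j) : ℤ))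

theorem stmt17 (m t k : ℕ) (ht : 2 ≤ t) (hk1 : t + 2 ≤ k) (hk2 : k ≤ m)
    (σ σ' : ℕ → ℕ) (hσ : ∀ i, σ i ≤ 2) (hσ' : ∀ i, σ' i ≤ 2)
    (hagree : ∀ i, 1 ≤ i → i ≤ m → i ∉ Finset.Icc (k - t - 1) k → σ i = σ' i)
    (hsum : ∑ j ∈ Finset.Icc (k - t - 1) k, σ j = ∑ j ∈ Finset.Icc (k - t - 1) k, σ' j) :
    (Qdiff k t σ σ' =
      ∑ r ∈ Finset.Icc 1 t,
        ((r : ℤ) * ((r : ℤ) + 1) / 2) * ((σ' (k - 1 - r) : ℤ) - (σ (k - 1 - r) : ℤ))) ∧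
    (Even t → 4 * Qdiff k t σ σ' ≤ (t : ℤ) * ((t : ℤ) + 2) ^ 2) ∧
    (¬ Even t → 4 * Qdiff k t σ σ' ≤ (t : ℤ) * ((t : ℤ) + 1) * ((t : ℤ) + 3)) := by
  classical
  open Finset in
  obtain ⟨K, hK1, hkK⟩ : ∃ K, 1 ≤ K ∧ k = K + t + 1 := ⟨k - t - 1, by omega, by omega⟩
  subst hkK
  set d : ℕ → ℤ := fun p => (σ' p : ℤ) - (σ p : ℤ) with hd_def
  have hdlo : ∀ p, -2 ≤ d p := by
    intro p
    have h1 : (σ p : ℤ) ≤ 2 := by exact_mod_cast hσ p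
    have h2 : (0:ℤ) ≤ (σ' p : ℤ) := Int.natCast_nonneg _
    simp only [hd_def]
    linarith
  have hdhi : ∀ p, d p ≤ 2 := by
    intro p
    have h1 : (σ' p : ℤ) ≤ 2 := by exact_mod_cast hσ' p
    have h2 : (0:ℤ) ≤ (σ p : ℤ) := Int.natCast_nonneg _
    simp only [hd_def]
    linarith
  have hd0 : ∀ p, 1 ≤ p → p < K → d p = 0 := by
    intro p h1 h2
    have hmem : p ∉ Finset.Icc (K + t + 1 - t - 1) (K + t + 1) := by
      simp only [Finset.mem_Icc]
      omega
    have := hagree p h1 (by omega) hmem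
    simp [hd_def, this]
  have hId : Qdiff (K+t+1) t σ σ' = ∑ j ∈ range t, (∑ i ∈ range (t-j), ((i:ℤ)+1)) * d (K + j) := by
    unfold Qdiff
    have e1 : K + t + 1 - t = K + 1 := by omega
    have e2 : K + t + 1 - 1 = K + t := by omega
    rw [e1, e2]
    exact qdiff_eq17 K t hK1 d hd0
  have hRHS : (∑ r ∈ Icc 1 t,
        ((r : ℤ) * ((r : ℤ) + 1) / 2) * ((σ' (K+t+1 - 1 - r) : ℤ) - (σ (K+t+1 - 1 - r) : ℤ)))
      = ∑ j ∈ range t, (∑ i ∈ range (t-j), ((i:ℤ)+1)) * d (K + j) := by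
    rw [← rhs_eq17 K t d]
    refine sum_congr rfl ?_
    intro r hr
    rw [mem_Icc] at hr
    have e3 : K + t + 1 - 1 - r = K + t - r := by omega
    rw [e3]
  have htot : ∑ i ∈ range t, d (K+i) ≤ 4 := by
    have hKk : K + t + 1 - t - 1 = K := by omega
    rw [hKk] at hsum
    have h0 : ∑ p ∈ Icc K (K+t+1), d p = 0 := by
      simp only [hd_def]
      rw [sum_sub_distrib]
      have hcast : ((∑ p ∈ Icc K (K+t+1), σ p : ℕ) : ℤ)
          = ((∑ p ∈ Icc K (K+t+1), σ' p : ℕ) : ℤ) := by exact_mod_cast hsum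
      push_cast at hcast
      linarith [hcast]
    have h1 : ∑ p ∈ Icc K (K+t+1), d p = ∑ i ∈ range (t+2), d (K+i) := by
      rw [← Finset.Ico_add_one_right_eq_Icc, sum_Ico_eq_sum_range]
      have : K + t + 1 + 1 - K = t + 2 := by omega
      rw [this]
    have h2 : ∑ i ∈ range (t+2), d (K+i)
        = (∑ i ∈ range t, d (K+i)) + d (K+t) + d (K+(t+1)) := by
      rw [sum_range_succ, sum_range_succ]
    have := hdlo (K+t)
    have := hdlo (K+(t+1))
    rw [h1, h2] at h0
    linarith
  obtain ⟨hEv, hOdd⟩ := opt_bound17 t (fun i => d (K+i)) (fun i => hdlo _) (fun i => hdhi _) htot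
  refine ⟨hId.trans hRHS.symm, ?_, ?_⟩
  · intro het
    rw [hId, abel_eq17 K t d]
    exact hEv het
  · intro hot
    rw [hId, abel_eq17 K t d]
    exact hOdd hot
end

section
/- If a single composition in the multiset C_i(s) of a binary string s ∈ {0,1}^n is replaced by a composition of strictly smaller weight (a skewed substitution) yielding corrupted cumulative weights w'_k, and C_{n-i+1}(s) is unaffected with i ≠ n−i+1, then w'_i < w'_{n-i+1}, and for every k ∉ {i, n−i+1} with k ≠ n−k+1 one has w'_k = w'_{n-k+1}; hence the corrupted multiset index i is identifiable as the unique k with w'_k < w'_{n-k+1}. -/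
lemma cumw_symm (n : ℕ) (s : ℕ → ℕ) (k : ℕ) (hk1 : 1 ≤ k) (hk2 : k ≤ n) :
    cumw n s k = cumw n s (n - k + 1) := by
  unfold cumw
  rw [Finset.sum_sigma', Finset.sum_sigma']
  apply Finset.sum_nbij' (fun p => ⟨p.2 - p.1 + 1, p.2⟩) (fun p => ⟨p.2 - p.1 + 1, p.2⟩)
  · rintro ⟨a, b⟩ h
    simp only [Finset.mem_sigma, Finset.mem_Icc] at h ⊢
    omega
  · rintro ⟨a, b⟩ h
    simp only [Finset.mem_sigma, Finset.mem_Icc] at h ⊢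
    omega
  · rintro ⟨a, b⟩ h
    simp only [Finset.mem_sigma, Finset.mem_Icc] at h
    simp only [Sigma.mk.inj_iff]
    constructor
    · omega
    · rfl
  · rintro ⟨a, b⟩ h
    simp only [Finset.mem_sigma, Finset.mem_Icc] at h
    simp only [Sigma.mk.inj_iff]
    constructor
    · omega
    · rfl
  · rintro ⟨a, b⟩ h
    rfl

theorem stmt19 (n i : ℕ) (s : ℕ → ℕ) (hbits : ∀ j, s j ≤ 1)
    (hi1 : 1 ≤ i) (hi2 : i ≤ n) (hne : i ≠ n - i + 1)
    (w' : ℕ → ℕ)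
    (hother : ∀ k, k ≠ i → w' k = cumw n s k)
    (hdec : w' i < cumw n s i) :
    w' i < w' (n - i + 1) ∧
    (∀ k ∈ Finset.Icc 1 n, k ≠ i → k ≠ n - i + 1 → k ≠ n - k + 1 → w' k = w' (n - k + 1)) ∧
    (∀ k ∈ Finset.Icc 1 n, w' k < w' (n - k + 1) → k = i) := by
  have key : ∀ k, 1 ≤ k → k ≤ n → cumw n s k = cumw n s (n - k + 1) :=
    fun k h1 h2 => cumw_symm n s k h1 h2
  refine ⟨?_, ?_, ?_⟩
  · rw [hother (n - i + 1) (fun h => hne h.symm), ← key i hi1 hi2]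
    exact hdec
  · intro k hk hk1 hk2 _
    simp only [Finset.mem_Icc] at hk
    have h3 : n - k + 1 ≠ i := by omega
    rw [hother k hk1, hother (n - k + 1) h3, key k hk.1 hk.2]
  · intro k hk hlt
    simp only [Finset.mem_Icc] at hk
    by_contra hki
    rcases eq_or_ne (n - k + 1) i with h | h
    · have : k = n - i + 1 := by omega
      rw [hother k hki, h, this, ← key i hi1 hi2] at hlt
      omega
    · rw [hother k hki, hother (n - k + 1) h, key k hk.1 hk.2] at hlt
      omega
end
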